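/- Let ρ'₀,…,ρ'ₙ ∈ ℤⁿ be primitive lattice vectors generating ℤⁿ with Σᵢ λᵢρ'ᵢ = 0 (λᵢ positive integers, gcd 1). Then for every i, the lattice generated by {ρ'₀,…,ρ'ₙ} \ {ρ'ᵢ} has index λᵢ in ℤⁿ; equivalently, |det(ρ'₀,…,ρ̂'ᵢ,…,ρ'ₙ)| = λᵢ. -/

import Mathlib

/-- Rows given by an injective family avoiding `j` give the same |det| as the
`j.succAbove` rows. -/
lemma row_perm_abs_det (n : ℕ) (ρ : Fin (n + 1) → Fin n → ℤ)
    (h : Fin n → Fin (n + 1)) (hinj : Function.Injective h)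
    (j : Fin (n + 1)) (hj : ∀ s, h s ≠ j) :
    |Matrix.det (Matrix.of fun s r : Fin n => ρ (h s) r)| =
      |Matrix.det (Matrix.of fun s r : Fin n => ρ (j.succAbove s) r)| := by
  set e := finSuccAboveEquiv j
  have hσ0 : Function.Injective fun s => e.symm ⟨h s, hj s⟩ := by
    intro a b hab
    have := congrArg e hab
    simp only [Equiv.apply_symm_apply, Subtype.mk.injEq] at this
    exact hinj this
  let σ : Equiv.Perm (Fin n) := Equiv.ofBijective _ ((Finite.injective_iff_bijective).mp hσ0)
  have hσ : ∀ s, j.succAbove (σ s) = h s := by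
    intro s
    have : e (σ s) = ⟨h s, hj s⟩ := by
      show e (e.symm _) = _
      simp
    have := congrArg Subtype.val this
    simpa [e, finSuccAboveEquiv_apply] using this
  have hmat : (Matrix.of fun s r : Fin n => ρ (h s) r) =
      (Matrix.of fun s r : Fin n => ρ (j.succAbove s) r).submatrix σ id := by
    funext s r
    simp [Matrix.submatrix, hσ s]
  rw [hmat, Matrix.det_permute]
  rcases Int.units_eq_one_or (Equiv.Perm.sign σ) with hs | hs <;> simp [hs, abs_mul]

lemma gcd_minors_eq_one (n : ℕ) (ρ : Fin (n + 1) → Fin n → ℤ)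
    (hgen : Submodule.span ℤ (Set.range ρ) = ⊤) :
    Finset.univ.gcd
      (fun j : Fin (n + 1) =>
        |Matrix.det (Matrix.of fun s r : Fin n => ρ (j.succAbove s) r)|) = 1 := by
  set D : Fin (n + 1) → ℤ :=
    fun j => |Matrix.det (Matrix.of fun s r : Fin n => ρ (j.succAbove s) r)| with hD
  set g : ℤ := Finset.univ.gcd D with hg
  -- coefficients expressing the standard basis vectors
  have hc : ∀ r : Fin n, ∃ c : Fin (n + 1) → ℤ, ∑ j, c j • ρ j = Pi.single r 1 := by
    intro r
    have : (Pi.single r 1 : Fin n → ℤ) ∈ Submodule.span ℤ (Set.range ρ) := by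
      rw [hgen]; trivial
    exact (Submodule.mem_span_range_iff_exists_fun ℤ).mp this
  choose c hcs using hc
  have hone : (1 : Matrix (Fin n) (Fin n) ℤ) = Matrix.of fun r => ∑ j, c r j • ρ j := by
    ext r s
    rw [Matrix.of_apply, hcs r]
    simp [Matrix.one_apply, Pi.single_apply, eq_comm]
  have hdvd1 : g ∣ 1 := by
    have h1 : (1 : ℤ) = Matrix.det (1 : Matrix (Fin n) (Fin n) ℤ) := (Matrix.det_one).symm
    rw [h1, hone]
    have hexp : Matrix.det (Matrix.of fun r => ∑ j, c r j • ρ j) =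
        ∑ p : Fin n → Fin (n + 1),
          (∏ r, c r (p r)) * Matrix.det (Matrix.of fun r => ρ (p r)) := by
      have := (Matrix.detRowAlternating (n := Fin n) (R := ℤ)).toMultilinearMap.map_sum
        (g := fun r j => c r j • ρ j)
      rw [show Matrix.det (Matrix.of fun r => ∑ j, c r j • ρ j) =
          (Matrix.detRowAlternating (n := Fin n) (R := ℤ)).toMultilinearMap
            (fun r => ∑ j, c r j • ρ j) from rfl, this]
      refine Finset.sum_congr rfl fun p _ => ?_
      have := (Matrix.detRowAlternating (n := Fin n) (R := ℤ)).toMultilinearMap.map_smul_univ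
        (fun r => c r (p r)) (fun r => ρ (p r))
      simp at this ⊢
      exact this
    rw [hexp]
    refine Finset.dvd_sum fun p _ => Dvd.dvd.mul_left ?_ _
    by_cases hp : Function.Injective p
    · -- p misses some index j
      have hns : ¬ Function.Surjective p := by
        intro hs
        have := Fintype.card_le_of_surjective p hs
        simp at this
      obtain ⟨j, hj⟩ : ∃ j, ∀ s, p s ≠ j := by
        simpa only [Function.Surjective, not_forall, not_exists] using hns
      have habs := row_perm_abs_det n ρ p hp j hj
      have : g ∣ D j := Finset.gcd_dvd (Finset.mem_univ j)
      rw [hD] at this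
      have : g ∣ |Matrix.det (Matrix.of fun s r : Fin n => ρ (p s) r)| := habs ▸ this
      exact (dvd_abs _ _).mp this
    · -- two equal rows
      rw [Function.not_injective_iff] at hp
      obtain ⟨a, b, hab, hne⟩ := hp
      have : Matrix.det (Matrix.of fun r => ρ (p r)) = 0 :=
        Matrix.det_zero_of_row_eq hne (show ρ (p a) = ρ (p b) by rw [hab])
      simp [this]
  have hnn : 0 ≤ g := by
    exact Int.nonneg_of_normalize_eq_self (Finset.normalize_gcd)
  exact Int.eq_one_of_dvd_one hnn hdvd1



/-- **Facet determinants of the weighted projective simplex.**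
If the primitive lattice vectors ρ'₀,…,ρ'ₙ generate ℤⁿ and satisfy Σᵢ λᵢρ'ᵢ = 0
(λᵢ ∈ ℤ_{>0}, gcd 1), then for every i the determinant of the n×n matrix whose
columns are the ρ'ⱼ, j ≠ i, has absolute value λᵢ; equivalently the lattice they
generate has index λᵢ in ℤⁿ. -/
theorem facet_determinant (n : ℕ) (ρ : Fin (n + 1) → Fin n → ℤ)
    (hprim : ∀ i, Finset.univ.gcd (ρ i) = 1)
    (hgen : Submodule.span ℤ (Set.range ρ) = ⊤)
    (lam : Fin (n + 1) → ℤ) (hpos : ∀ i, 0 < lam i)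
    (hgcd : Finset.univ.gcd lam = 1)
    (hrel : ∑ i, lam i • ρ i = 0) :
    ∀ i : Fin (n + 1),
      |Matrix.det (Matrix.of fun r s : Fin n => ρ (i.succAbove s) r)| = lam i := by
  set D : Fin (n + 1) → ℤ :=
    fun j => |Matrix.det (Matrix.of fun s r : Fin n => ρ (j.succAbove s) r)| with hD
  -- Step A (basic form)
  have key : ∀ (i : Fin (n + 1)) (t : Fin n),
      lam i * D (i.succAbove t) = lam (i.succAbove t) * D i := by
    intro i t
    set N : Matrix (Fin n) (Fin n) ℤ := Matrix.of fun s r => ρ (i.succAbove s) r with hN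
    have hNrow : ∀ s, N s = ρ (i.succAbove s) := fun s => rfl
    have hsum : lam i • ρ i = ∑ s, (-lam (i.succAbove s)) • N s := by
      have := Fin.sum_univ_succAbove (fun k => lam k • ρ k) i
      rw [hrel] at this
      have h0 : lam i • ρ i + ∑ s, lam (i.succAbove s) • ρ (i.succAbove s) = 0 := this.symm
      have := eq_neg_of_add_eq_zero_left h0
      rw [this, ← Finset.sum_neg_distrib]
      exact Finset.sum_congr rfl fun s _ => by rw [hNrow, neg_smul]
    -- two evaluations of the same determinant
    have e1 : Matrix.det (N.updateRow t (lam i • ρ i)) =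
        lam i * Matrix.det (N.updateRow t (ρ i)) :=
      Matrix.det_updateRow_smul N t (lam i) (ρ i)
    have e2 : Matrix.det (N.updateRow t (lam i • ρ i)) = -lam (i.succAbove t) * Matrix.det N := by
      rw [hsum, Matrix.det_updateRow_sum N t (fun s => -lam (i.succAbove s))]
      simp [smul_eq_mul]
    -- identify |det (N.updateRow t (ρ i))| with D (i.succAbove t)
    have hupd : N.updateRow t (ρ i) =
        Matrix.of fun s r => ρ ((fun s => if s = t then i else i.succAbove s) s) r := by
      ext s r
      by_cases hs : s = t
      · simp [Matrix.updateRow_apply, hs]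
      · simp only [Matrix.updateRow_apply, if_neg hs, Matrix.of_apply]
        rfl
    have hinj : Function.Injective fun s => if s = t then i else i.succAbove s := by
      intro a b hab
      have hab' : (if a = t then i else i.succAbove a) =
          (if b = t then i else i.succAbove b) := hab
      by_cases ha : a = t <;> by_cases hb : b = t
      · rw [ha, hb]
      · rw [if_pos ha, if_neg hb] at hab'
        exact absurd hab'.symm (Fin.succAbove_ne i b)
      · rw [if_neg ha, if_pos hb] at hab'
        exact absurd hab' (Fin.succAbove_ne i a)
      · rw [if_neg ha, if_neg hb] at hab'
        exact Fin.succAbove_right_injective hab'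
    have hne : ∀ s, (if s = t then i else i.succAbove s) ≠ i.succAbove t := by
      intro s hcon
      by_cases hs : s = t
      · rw [if_pos hs] at hcon
        exact (Fin.succAbove_ne i t) hcon.symm
      · rw [if_neg hs] at hcon
        exact hs (Fin.succAbove_right_injective hcon)
    have habs : |Matrix.det (N.updateRow t (ρ i))| = D (i.succAbove t) := by
      rw [hupd, hD]
      exact row_perm_abs_det n ρ _ hinj (i.succAbove t) hne
    have := congrArg abs (e1.symm.trans e2)
    rw [abs_mul, abs_mul, abs_neg, habs, abs_of_pos (hpos i),
      abs_of_pos (hpos (i.succAbove t))] at this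
    exact this
  have key2 : ∀ i j, lam i * D j = lam j * D i := by
    intro i j
    rcases eq_or_ne j i with rfl | hne
    · ring
    · obtain ⟨t, rfl⟩ := Fin.exists_succAbove_eq hne
      exact key i t
  have hDg : Finset.univ.gcd D = 1 := gcd_minors_eq_one n ρ hgen
  intro i
  have hDnn : 0 ≤ D i := abs_nonneg _
  have h1 : Finset.univ.gcd (fun j => lam i * D j) = lam i := by
    rw [Finset.gcd_mul_left, hDg, mul_one, Int.normalize_of_nonneg (hpos i).le]
  have h2 : Finset.univ.gcd (fun j => lam i * D j) = D i := by
    have : (fun j => lam i * D j) = fun j => D i * lam j := by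
      funext j; rw [key2 i j, mul_comm]
    rw [this, Finset.gcd_mul_left, hgcd, mul_one, Int.normalize_of_nonneg hDnn]
  have hfin : D i = lam i := h2 ▸ h1
  have htr : (Matrix.of fun r s : Fin n => ρ (i.succAbove s) r) =
      Matrix.transpose (Matrix.of fun s r : Fin n => ρ (i.succAbove s) r) :=
    Matrix.ext fun r s => rfl
  rw [htr, Matrix.det_transpose]
  exact hfin
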